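/- Baseline invariance in the tree policy gradient: under the assumptions of the tree policy gradient theorem, subtracting from the return of each non-leaf node i any baseline b(s_i) depending only on the state does not change the expectation; formally, E_{τ∼p_θ}[∑_{i∈N∖L} (d/dθ log π_θ(a_i|s_i)) · b(s_i)] = 0 for any function b : S → ℝ. -/

import Mathlib

/-- Finite binary tree trajectories of a tree MDP: every node carries a state,
every non-leaf node also carries an action. -/
inductive BT (S A : Type) : Type
  | leaf (s : S)
  | node (s : S) (a : A) (l r : BT S A)
deriving DecidableEq

namespace BT

variable {S A : Type}

/-- State at the root of the trajectory. -/
def root : BT S A → S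
  | leaf s => s
  | node s _ _ _ => s

/-- Number of nodes. -/
def size : BT S A → ℕ
  | leaf _ => 1
  | node _ _ l r => size l + size r + 1

/-- Total reward collected over all nodes of the trajectory. -/
def reward (r : S → ℝ) : BT S A → ℝ
  | leaf s => r s
  | node s _ l ri => r s + reward r l + reward r ri

/-- Probability of generating a given trajectory starting from its root state:
the product, over non-leaf nodes `i`, of `π(a_i|s_i) p⁻(s_{ch⁻(i)}|s_i,a_i)
p⁺(s_{ch⁺(i)}|s_i,a_i)`, together with the leaf-indicator consistency
conditions given by `lf`. -/
def prob (lf : S → Bool) (π : S → A → ℝ) (pm pp : S → A → S → ℝ) : BT S A → ℝ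
  | leaf s => if lf s then 1 else 0
  | node s a l ri =>
      (if lf s then 0 else 1) * π s a * pm s a (root l) * pp s a (root ri)
        * prob lf π pm pp l * prob lf π pm pp ri

end BT

/-- The (finite) set of all trajectories of depth at most `n`. -/
def treesUpTo (S A : Type) [Fintype S] [Fintype A] [DecidableEq S] [DecidableEq A] :
    ℕ → Finset (BT S A)
  | 0 => Finset.univ.image BT.leaf
  | n + 1 =>
      Finset.univ.image BT.leaf ∪
        ((Finset.univ ×ˢ Finset.univ ×ˢ treesUpTo S A n ×ˢ treesUpTo S A n).image
          (fun x : S × A × BT S A × BT S A => BT.node x.1 x.2.1 x.2.2.1 x.2.2.2))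

namespace BT

/-- Baseline integrand: the sum, over the non-leaf nodes `i` of the trajectory,
of `(d/dθ log π_θ(a_i|s_i)) · b(s_i)`, for a state-only baseline `b`. -/
noncomputable def baselineTerm {S A : Type} (b : S → ℝ) (π : ℝ → S → A → ℝ) (θ : ℝ) :
    BT S A → ℝ
  | leaf _ => 0
  | node s a l ri =>
      deriv (fun u => Real.log (π u s a)) θ * b s
        + baselineTerm b π θ l + baselineTerm b π θ ri

end BT
section Comb
variable {S A : Type} [Fintype S] [Fintype A] [DecidableEq S] [DecidableEq A]

lemma sum_treesUpTo_zero (f : BT S A → ℝ) :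
    ∑ τ ∈ treesUpTo S A 0, f τ = ∑ s : S, f (BT.leaf s) := by
  rw [treesUpTo, Finset.sum_image (fun a _ b _ h => by injection h)]

lemma sum_treesUpTo_succ (f : BT S A → ℝ) (n : ℕ) :
    ∑ τ ∈ treesUpTo S A (n + 1), f τ
      = ∑ s : S, f (BT.leaf s)
        + ∑ s : S, ∑ a : A, ∑ l ∈ treesUpTo S A n, ∑ r ∈ treesUpTo S A n,
            f (BT.node s a l r) := by
  rw [treesUpTo, Finset.sum_union]
  · congr 1
    · rw [Finset.sum_image (fun a _ b _ h => by injection h)]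
    · rw [Finset.sum_image]
      · rw [Finset.sum_product, Finset.sum_congr rfl fun s _ => Finset.sum_product _ _ _]
        exact Finset.sum_congr rfl fun s _ => Finset.sum_congr rfl fun a _ =>
          Finset.sum_product _ _ _
      · rintro ⟨s1, a1, l1, r1⟩ _ ⟨s2, a2, l2, r2⟩ _ h
        simp only [BT.node.injEq] at h
        simp [h.1, h.2.1, h.2.2.1, h.2.2.2]
  · simp only [Finset.disjoint_left, Finset.mem_image]
    rintro x ⟨s, _, rfl⟩ ⟨⟨s1, a1, l1, r1⟩, _, h⟩
    cases h

lemma sum_fiber (T : Finset (BT S A)) (g : BT S A → ℝ) :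
    ∑ τ ∈ T, g τ = ∑ s : S, ∑ τ ∈ T.filter (fun τ => BT.root τ = s), g τ :=
  (Finset.sum_fiberwise T BT.root g).symm

lemma sum_root_mul (T : Finset (BT S A)) (F : S → ℝ) (g : BT S A → ℝ) :
    ∑ τ ∈ T, F (BT.root τ) * g τ
      = ∑ s : S, F s * ∑ τ ∈ T.filter (fun τ => BT.root τ = s), g τ := by
  rw [sum_fiber (g := fun τ => F (BT.root τ) * g τ)]
  refine Finset.sum_congr rfl fun s _ => ?_
  rw [Finset.mul_sum]
  refine Finset.sum_congr rfl fun τ hτ => ?_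
  rw [(Finset.mem_filter.mp hτ).2]

end Comb
section Comb2
variable {S A : Type} [Fintype S] [Fintype A] [DecidableEq S] [DecidableEq A]

lemma sum_if_const {α : Type*} (T : Finset α) (c : Prop) [Decidable c] (f : α → ℝ) :
    ∑ x ∈ T, (if c then f x else 0) = if c then ∑ x ∈ T, f x else 0 := by
  split_ifs <;> simp

lemma sum_filter_zero (f : BT S A → ℝ) (s : S) :
    ∑ τ ∈ (treesUpTo S A 0).filter (fun τ => BT.root τ = s), f τ = f (BT.leaf s) := by
  rw [Finset.sum_filter, sum_treesUpTo_zero]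
  simp only [BT.root]
  exact (Finset.sum_ite_eq' _ _ _).trans (by simp)

lemma sum_filter_succ (f : BT S A → ℝ) (n : ℕ) (s : S) :
    ∑ τ ∈ (treesUpTo S A (n + 1)).filter (fun τ => BT.root τ = s), f τ
      = f (BT.leaf s)
        + ∑ a : A, ∑ l ∈ treesUpTo S A n, ∑ r ∈ treesUpTo S A n,
            f (BT.node s a l r) := by
  rw [Finset.sum_filter, sum_treesUpTo_succ]
  simp only [BT.root]
  congr 1
  · exact (Finset.sum_ite_eq' _ _ _).trans (by simp)
  · show (∑ s' : S, ∑ a : A, ∑ l ∈ treesUpTo S A n, ∑ r ∈ treesUpTo S A n,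
        if s' = s then f (BT.node s' a l r) else 0) = _
    simp only [sum_if_const]
    simp [Finset.sum_ite_eq']

end Comb2
section Mass
variable {S A : Type} [Fintype S] [Fintype A] [DecidableEq S] [DecidableEq A]
variable (lf : S → Bool) (π1 : S → A → ℝ) (pm pp : S → A → S → ℝ)

noncomputable def Mn (n : ℕ) (s : S) : ℝ :=
  ∑ τ ∈ (treesUpTo S A n).filter (fun τ => BT.root τ = s), BT.prob lf π1 pm pp τ

lemma double_sum_split (T : Finset (BT S A)) (F G : S → ℝ) (g h : BT S A → ℝ) :
    ∑ l ∈ T, ∑ r ∈ T, F (BT.root l) * g l * (G (BT.root r) * h r)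
      = (∑ s' : S, F s' * ∑ l ∈ T.filter (fun τ => BT.root τ = s'), g l)
        * (∑ s' : S, G s' * ∑ r ∈ T.filter (fun τ => BT.root τ = s'), h r) := by
  calc ∑ l ∈ T, ∑ r ∈ T, F (BT.root l) * g l * (G (BT.root r) * h r)
      = (∑ l ∈ T, F (BT.root l) * g l) * (∑ r ∈ T, G (BT.root r) * h r) :=
        (Finset.sum_mul_sum _ _ _ _).symm
    _ = _ := by rw [sum_root_mul, sum_root_mul]

lemma Mn_zero (s : S) : Mn lf π1 pm pp 0 s = if lf s then 1 else 0 :=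
  sum_filter_zero _ s

lemma Mn_succ (n : ℕ) (s : S) :
    Mn lf π1 pm pp (n + 1) s
      = (if lf s then 1 else 0)
        + (if lf s then 0 else 1) * ∑ a : A, π1 s a
            * (∑ s' : S, pm s a s' * Mn lf π1 pm pp n s')
            * (∑ s' : S, pp s a s' * Mn lf π1 pm pp n s') := by
  rw [Mn, sum_filter_succ]
  congr 1
  have : ∀ a : A, ∑ l ∈ treesUpTo S A n, ∑ r ∈ treesUpTo S A n,
      BT.prob lf π1 pm pp (BT.node s a l r)
      = (if lf s then 0 else 1) * π1 s a
          * ((∑ s' : S, pm s a s' * Mn lf π1 pm pp n s')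
            * (∑ s' : S, pp s a s' * Mn lf π1 pm pp n s')) := by
    intro a
    have h1 : ∀ l r : BT S A, BT.prob lf π1 pm pp (BT.node s a l r)
        = (if lf s then 0 else 1) * π1 s a
          * (pm s a (BT.root l) * BT.prob lf π1 pm pp l
            * (pp s a (BT.root r) * BT.prob lf π1 pm pp r)) := by
      intro l r; rw [BT.prob]; ring
    simp only [h1, ← Finset.mul_sum]
    rw [← Finset.sum_mul, sum_root_mul, sum_root_mul]
    simp only [Mn]
  simp only [this]
  rw [Finset.mul_sum]
  exact Finset.sum_congr rfl fun a _ => by ring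

end Mass
section Bounds
variable {S A : Type} [Fintype S] [Fintype A] [DecidableEq S] [DecidableEq A]
variable (lf : S → Bool) (π1 : S → A → ℝ) (pm pp : S → A → S → ℝ)

lemma conv_nonneg' (w M : S → ℝ) (hw0 : ∀ s', 0 ≤ w s') (hM0 : ∀ s', 0 ≤ M s') :
    0 ≤ ∑ s' : S, w s' * M s' :=
  Finset.sum_nonneg fun s' _ => mul_nonneg (hw0 s') (hM0 s')

lemma conv_le_one (w M : S → ℝ) (hw0 : ∀ s', 0 ≤ w s') (hw1 : ∑ s' : S, w s' = 1)
    (hM1 : ∀ s', M s' ≤ 1) : ∑ s' : S, w s' * M s' ≤ 1 := by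
  calc ∑ s' : S, w s' * M s' ≤ ∑ s' : S, w s' * 1 :=
        Finset.sum_le_sum fun s' _ => mul_le_mul_of_nonneg_left (hM1 s') (hw0 s')
    _ = 1 := by simpa using hw1

lemma prob_nonneg (hπ : ∀ s a, 0 ≤ π1 s a) (hpm0 : ∀ s a s', 0 ≤ pm s a s')
    (hpp0 : ∀ s a s', 0 ≤ pp s a s') : ∀ τ : BT S A, 0 ≤ BT.prob lf π1 pm pp τ := by
  intro τ
  induction τ with
  | leaf s => rw [BT.prob]; split_ifs <;> norm_num
  | node s a l r ihl ihr =>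
      rw [BT.prob]
      have hc : (0:ℝ) ≤ if lf s then 0 else 1 := by split_ifs <;> norm_num
      exact mul_nonneg (mul_nonneg (mul_nonneg (mul_nonneg (mul_nonneg hc (hπ s a))
        (hpm0 s a _)) (hpp0 s a _)) ihl) ihr

lemma Mn_nonneg (hπ : ∀ s a, 0 ≤ π1 s a) (hpm0 : ∀ s a s', 0 ≤ pm s a s')
    (hpp0 : ∀ s a s', 0 ≤ pp s a s') (n : ℕ) (s : S) : 0 ≤ Mn lf π1 pm pp n s :=
  Finset.sum_nonneg fun τ _ => prob_nonneg lf π1 pm pp hπ hpm0 hpp0 τ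

lemma Mn_le_one (hπ : ∀ s a, 0 ≤ π1 s a) (hπ1 : ∀ s, ∑ a : A, π1 s a = 1)
    (hpm0 : ∀ s a s', 0 ≤ pm s a s') (hpm1 : ∀ s a, ∑ s' : S, pm s a s' = 1)
    (hpp0 : ∀ s a s', 0 ≤ pp s a s') (hpp1 : ∀ s a, ∑ s' : S, pp s a s' = 1) :
    ∀ n s, Mn lf π1 pm pp n s ≤ 1 := by
  intro n
  induction n with
  | zero => intro s; rw [Mn_zero]; split_ifs <;> norm_num
  | succ n ih =>
      intro s
      rw [Mn_succ]
      by_cases h : lf s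
      · simp [h]
      · simp only [h, if_false, if_neg, Bool.false_eq_true]
        have hb : ∀ a, (π1 s a * ∑ s' : S, pm s a s' * Mn lf π1 pm pp n s')
            * (∑ s' : S, pp s a s' * Mn lf π1 pm pp n s') ≤ π1 s a * 1 * 1 := by
          intro a
          have hA0 := conv_nonneg' (pm s a) _ (hpm0 s a)
            (fun s' => Mn_nonneg lf π1 pm pp hπ hpm0 hpp0 n s')
          have hA1 := conv_le_one (pm s a) _ (hpm0 s a) (hpm1 s a) ih
          have hB0 := conv_nonneg' (pp s a) _ (hpp0 s a)
            (fun s' => Mn_nonneg lf π1 pm pp hπ hpm0 hpp0 n s')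
          have hB1 := conv_le_one (pp s a) _ (hpp0 s a) (hpp1 s a) ih
          have hπa := hπ s a
          have hAB : (∑ s' : S, pm s a s' * Mn lf π1 pm pp n s')
              * (∑ s' : S, pp s a s' * Mn lf π1 pm pp n s') ≤ 1 := by nlinarith
          nlinarith [mul_le_mul_of_nonneg_left hAB hπa]
        have hsum : ∑ a : A, (π1 s a * ∑ s' : S, pm s a s' * Mn lf π1 pm pp n s')
            * (∑ s' : S, pp s a s' * Mn lf π1 pm pp n s') ≤ 1 := by
          calc _ ≤ ∑ a : A, π1 s a * 1 * 1 := Finset.sum_le_sum fun a _ => hb a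
            _ = (1:ℝ) := by simpa using hπ1 s
        linarith
end Bounds
section Key
variable {S A : Type} [Fintype S] [Fintype A] [DecidableEq S] [DecidableEq A]
variable (lf : S → Bool) (pm pp : S → A → S → ℝ) (π : ℝ → S → A → ℝ) (b : S → ℝ) (θ₀ : ℝ)

noncomputable def Gn (n : ℕ) (s : S) : ℝ :=
  ∑ τ ∈ (treesUpTo S A n).filter (fun τ => BT.root τ = s),
    BT.prob lf (π θ₀) pm pp τ * BT.baselineTerm b π θ₀ τ

lemma Gn_zero (s : S) : Gn lf pm pp π b θ₀ 0 s = 0 := by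
  rw [Gn, sum_filter_zero]
  simp [BT.baselineTerm]

lemma double_sum_scaled (T : Finset (BT S A)) (K : ℝ) (F G : S → ℝ) (g h : BT S A → ℝ) :
    ∑ l ∈ T, ∑ r ∈ T, K * (F (BT.root l) * g l * (G (BT.root r) * h r))
      = K * ((∑ s' : S, F s' * ∑ l ∈ T.filter (fun τ => BT.root τ = s'), g l)
        * (∑ s' : S, G s' * ∑ r ∈ T.filter (fun τ => BT.root τ = s'), h r)) := by
  simp only [← Finset.mul_sum]
  rw [← Finset.sum_mul, sum_root_mul, sum_root_mul]

lemma Gn_succ (n : ℕ) (s : S) :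
    Gn lf pm pp π b θ₀ (n + 1) s
      = (if lf s then 0 else 1) * ∑ a : A, π θ₀ s a
          * (deriv (fun u => Real.log (π u s a)) θ₀ * b s
              * (∑ s' : S, pm s a s' * Mn lf (π θ₀) pm pp n s')
              * (∑ s' : S, pp s a s' * Mn lf (π θ₀) pm pp n s')
            + (∑ s' : S, pm s a s' * Gn lf pm pp π b θ₀ n s')
              * (∑ s' : S, pp s a s' * Mn lf (π θ₀) pm pp n s')
            + (∑ s' : S, pm s a s' * Mn lf (π θ₀) pm pp n s')
              * (∑ s' : S, pp s a s' * Gn lf pm pp π b θ₀ n s')) := by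
  rw [Gn, sum_filter_succ]
  have hleaf : BT.prob lf (π θ₀) pm pp (BT.leaf s) * BT.baselineTerm b π θ₀ (BT.leaf s)
      = 0 := by simp [BT.baselineTerm]
  rw [hleaf, zero_add]
  have key : ∀ a : A, ∑ l ∈ treesUpTo S A n, ∑ r ∈ treesUpTo S A n,
      BT.prob lf (π θ₀) pm pp (BT.node s a l r) * BT.baselineTerm b π θ₀ (BT.node s a l r)
      = (if lf s then 0 else 1) * (π θ₀ s a
          * (deriv (fun u => Real.log (π u s a)) θ₀ * b s
              * (∑ s' : S, pm s a s' * Mn lf (π θ₀) pm pp n s')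
              * (∑ s' : S, pp s a s' * Mn lf (π θ₀) pm pp n s')
            + (∑ s' : S, pm s a s' * Gn lf pm pp π b θ₀ n s')
              * (∑ s' : S, pp s a s' * Mn lf (π θ₀) pm pp n s')
            + (∑ s' : S, pm s a s' * Mn lf (π θ₀) pm pp n s')
              * (∑ s' : S, pp s a s' * Gn lf pm pp π b θ₀ n s'))) := by
    intro a
    set c : ℝ := if lf s then 0 else 1 with hc
    set X : ℝ := deriv (fun u => Real.log (π u s a)) θ₀ with hX
    have h1 : ∀ l r : BT S A,
        BT.prob lf (π θ₀) pm pp (BT.node s a l r) * BT.baselineTerm b π θ₀ (BT.node s a l r)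
        = (c * π θ₀ s a * (X * b s))
            * (pm s a (BT.root l) * BT.prob lf (π θ₀) pm pp l
              * (pp s a (BT.root r) * BT.prob lf (π θ₀) pm pp r))
          + (c * π θ₀ s a)
            * (pm s a (BT.root l) * (BT.prob lf (π θ₀) pm pp l * BT.baselineTerm b π θ₀ l)
              * (pp s a (BT.root r) * BT.prob lf (π θ₀) pm pp r))
          + (c * π θ₀ s a)
            * (pm s a (BT.root l) * BT.prob lf (π θ₀) pm pp l
              * (pp s a (BT.root r)
                * (BT.prob lf (π θ₀) pm pp r * BT.baselineTerm b π θ₀ r))) := by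
      intro l r
      rw [BT.prob, BT.baselineTerm]
      ring
    simp only [h1, Finset.sum_add_distrib]
    rw [double_sum_scaled, double_sum_scaled, double_sum_scaled]
    simp only [Mn, Gn]
    ring
  simp only [key]
  rw [Finset.mul_sum]

end Key
section KeyInd
variable {S A : Type} [Fintype S] [Fintype A] [DecidableEq S] [DecidableEq A]

lemma key_induction (lf : S → Bool) (pm pp : S → A → S → ℝ) (π : ℝ → S → A → ℝ)
    (b : S → ℝ) (θ₀ : ℝ)
    (hπpos : ∀ θ s a, 0 < π θ s a)
    (hπdiff : ∀ s a, Differentiable ℝ (fun θ => π θ s a))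
    (hπsum : ∀ θ s, ∑ a : A, π θ s a = 1)
    (hpm0 : ∀ s a s', 0 ≤ pm s a s') (hpm1 : ∀ s a, ∑ s' : S, pm s a s' = 1)
    (hpp0 : ∀ s a s', 0 ≤ pp s a s') (hpp1 : ∀ s a, ∑ s' : S, pp s a s' = 1) :
    ∀ n (s : S), Mn lf (π θ₀) pm pp n s = 1 → Gn lf pm pp π b θ₀ n s = 0 := by
  have hπ0 : ∀ s a, 0 ≤ π θ₀ s a := fun s a => (hπpos θ₀ s a).le
  have hM0 : ∀ n (s : S), 0 ≤ Mn lf (π θ₀) pm pp n s :=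
    fun n s => Mn_nonneg lf (π θ₀) pm pp hπ0 hpm0 hpp0 n s
  have hM1 : ∀ n (s : S), Mn lf (π θ₀) pm pp n s ≤ 1 :=
    fun n s => Mn_le_one lf (π θ₀) pm pp hπ0 (hπsum θ₀) hpm0 hpm1 hpp0 hpp1 n s
  have hlogd : ∀ s a, π θ₀ s a * deriv (fun u => Real.log (π u s a)) θ₀
      = deriv (fun θ => π θ s a) θ₀ := by
    intro s a
    have h := ((hπdiff s a θ₀).hasDerivAt.log (ne_of_gt (hπpos θ₀ s a)))
    rw [h.deriv, mul_comm]
    exact div_mul_cancel₀ _ (ne_of_gt (hπpos θ₀ s a))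
  have hderiv0 : ∀ s, ∑ a : A, deriv (fun θ => π θ s a) θ₀ = 0 := by
    intro s
    have h2 : deriv (fun θ => ∑ a : A, π θ s a) θ₀ = 0 := by
      have h3 : (fun θ => ∑ a : A, π θ s a) = fun _ => (1:ℝ) :=
        funext fun θ => hπsum θ s
      rw [h3]; simp
    rw [← h2, deriv_fun_sum fun a _ => hπdiff s a θ₀]
  intro n
  induction n with
  | zero => intro s _; exact Gn_zero lf pm pp π b θ₀ s
  | succ n ih =>
      intro s hM
      by_cases hlf : lf s
      · rw [Gn_succ]; simp [hlf]
      · rw [Mn_succ] at hM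
        simp only [hlf, Bool.false_eq_true, if_false, if_true, zero_add, one_mul] at hM
        set Al : A → ℝ := fun a => ∑ s' : S, pm s a s' * Mn lf (π θ₀) pm pp n s' with hAldef
        set Ar : A → ℝ := fun a => ∑ s' : S, pp s a s' * Mn lf (π θ₀) pm pp n s' with hArdef
        have hAl0 : ∀ a, 0 ≤ Al a := fun a => conv_nonneg' _ _ (hpm0 s a) (hM0 n)
        have hAl1 : ∀ a, Al a ≤ 1 := fun a => conv_le_one _ _ (hpm0 s a) (hpm1 s a) (hM1 n)
        have hAr0 : ∀ a, 0 ≤ Ar a := fun a => conv_nonneg' _ _ (hpp0 s a) (hM0 n)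
        have hAr1 : ∀ a, Ar a ≤ 1 := fun a => conv_le_one _ _ (hpp0 s a) (hpp1 s a) (hM1 n)
        -- products equal one
        have hzero : ∑ a : A, π θ₀ s a * (1 - Al a * Ar a) = 0 := by
          have : ∑ a : A, π θ₀ s a * (Al a * Ar a) = 1 := by
            rw [← hM]; exact Finset.sum_congr rfl fun a _ => by ring
          simp only [mul_sub, mul_one, Finset.sum_sub_distrib, hπsum θ₀ s, this, sub_self]
        have hprod : ∀ a : A, Al a * Ar a = 1 := by
          intro a
          have h := (Finset.sum_eq_zero_iff_of_nonneg (fun a _ =>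
            mul_nonneg (hπ0 s a) (by nlinarith [hAl1 a, hAr1 a, hAl0 a, hAr0 a]))).mp
            hzero a (Finset.mem_univ a)
          have := hπpos θ₀ s a
          rcases mul_eq_zero.mp h with h' | h'
          · linarith
          · linarith
        have hAl : ∀ a, Al a = 1 := fun a =>
          le_antisymm (hAl1 a) (by nlinarith [hprod a, hAl0 a, hAr1 a, hAr0 a])
        have hAr : ∀ a, Ar a = 1 := fun a =>
          le_antisymm (hAr1 a) (by nlinarith [hprod a, hAl0 a, hAl1 a, hAr0 a])
        -- M = 1 on supports, hence G vanishes on supports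
        have hCl : ∀ a : A, ∑ s' : S, pm s a s' * Gn lf pm pp π b θ₀ n s' = 0 := by
          intro a
          have hz : ∑ s' : S, pm s a s' * (1 - Mn lf (π θ₀) pm pp n s') = 0 := by
            simp only [mul_sub, mul_one, Finset.sum_sub_distrib, hpm1 s a]
            have h1 : ∑ s' : S, pm s a s' * Mn lf (π θ₀) pm pp n s' = 1 := hAl a
            rw [h1, sub_self]
          refine Finset.sum_eq_zero fun s' _ => ?_
          rcases eq_or_lt_of_le (hpm0 s a s') with h' | h'
          · rw [← h', zero_mul]
          · have h := (Finset.sum_eq_zero_iff_of_nonneg (fun s' _ =>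
              mul_nonneg (hpm0 s a s') (by linarith [hM1 n s']))).mp hz s' (Finset.mem_univ s')
            have hMeq : Mn lf (π θ₀) pm pp n s' = 1 := by
              rcases mul_eq_zero.mp h with h'' | h'' <;> [linarith; linarith]
            rw [ih s' hMeq, mul_zero]
        have hCr : ∀ a : A, ∑ s' : S, pp s a s' * Gn lf pm pp π b θ₀ n s' = 0 := by
          intro a
          have hz : ∑ s' : S, pp s a s' * (1 - Mn lf (π θ₀) pm pp n s') = 0 := by
            simp only [mul_sub, mul_one, Finset.sum_sub_distrib, hpp1 s a]
            have h1 : ∑ s' : S, pp s a s' * Mn lf (π θ₀) pm pp n s' = 1 := hAr a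
            rw [h1, sub_self]
          refine Finset.sum_eq_zero fun s' _ => ?_
          rcases eq_or_lt_of_le (hpp0 s a s') with h' | h'
          · rw [← h', zero_mul]
          · have h := (Finset.sum_eq_zero_iff_of_nonneg (fun s' _ =>
              mul_nonneg (hpp0 s a s') (by linarith [hM1 n s']))).mp hz s' (Finset.mem_univ s')
            have hMeq : Mn lf (π θ₀) pm pp n s' = 1 := by
              rcases mul_eq_zero.mp h with h'' | h'' <;> [linarith; linarith]
            rw [ih s' hMeq, mul_zero]
        rw [Gn_succ]
        simp only [hlf, Bool.false_eq_true, if_false, one_mul]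
        have hfinal : ∀ a : A, π θ₀ s a
            * (deriv (fun u => Real.log (π u s a)) θ₀ * b s * Al a * Ar a
              + (∑ s' : S, pm s a s' * Gn lf pm pp π b θ₀ n s') * Ar a
              + Al a * (∑ s' : S, pp s a s' * Gn lf pm pp π b θ₀ n s'))
            = deriv (fun θ => π θ s a) θ₀ * b s := by
          intro a
          rw [hAl a, hAr a, hCl a, hCr a, ← hlogd s a]
          ring
        calc ∑ a : A, π θ₀ s a
            * (deriv (fun u => Real.log (π u s a)) θ₀ * b s * Al a * Ar a
              + (∑ s' : S, pm s a s' * Gn lf pm pp π b θ₀ n s') * Ar a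
              + Al a * (∑ s' : S, pp s a s' * Gn lf pm pp π b θ₀ n s'))
            = ∑ a : A, deriv (fun θ => π θ s a) θ₀ * b s :=
              Finset.sum_congr rfl fun a _ => hfinal a
          _ = (∑ a : A, deriv (fun θ => π θ s a) θ₀) * b s := by rw [Finset.sum_mul]
          _ = 0 := by rw [hderiv0 s, zero_mul]

end KeyInd

/-- Baseline invariance in the tree policy gradient: for any baseline
`b : S → ℝ` depending only on the state,
`E_{τ∼p_θ}[∑_{i∈N∖L} (d/dθ log π_θ(a_i|s_i)) · b(s_i)] = 0`. -/
theorem stmt5 {S A : Type} [Fintype S] [Fintype A] [DecidableEq S] [DecidableEq A]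
    (lf : S → Bool) (pinit : S → ℝ) (pm pp : S → A → S → ℝ)
    (π : ℝ → S → A → ℝ) (b : S → ℝ) (D : ℕ) (θ₀ : ℝ)
    (hπpos : ∀ θ s a, 0 < π θ s a)
    (hπdiff : ∀ s a, Differentiable ℝ (fun θ => π θ s a))
    (hπsum : ∀ θ s, ∑ a : A, π θ s a = 1)
    (hpminit : ∀ s, 0 ≤ pinit s) (hpinit1 : ∑ s : S, pinit s = 1)
    (hpm0 : ∀ s a s', 0 ≤ pm s a s') (hpm1 : ∀ s a, ∑ s' : S, pm s a s' = 1)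
    (hpp0 : ∀ s a s', 0 ≤ pp s a s') (hpp1 : ∀ s a, ∑ s' : S, pp s a s' = 1)
    (hmass : ∀ θ s, ∑ τ ∈ (treesUpTo S A D).filter (fun τ => BT.root τ = s),
        BT.prob lf (π θ) pm pp τ = 1) :
    ∑ τ ∈ treesUpTo S A D,
      pinit (BT.root τ) * BT.prob lf (π θ₀) pm pp τ * BT.baselineTerm b π θ₀ τ
      = 0 := by
  calc ∑ τ ∈ treesUpTo S A D,
        pinit (BT.root τ) * BT.prob lf (π θ₀) pm pp τ * BT.baselineTerm b π θ₀ τ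
      = ∑ τ ∈ treesUpTo S A D,
          pinit (BT.root τ) * (BT.prob lf (π θ₀) pm pp τ * BT.baselineTerm b π θ₀ τ) :=
        Finset.sum_congr rfl fun τ _ => by ring
    _ = ∑ s : S, pinit s * Gn lf pm pp π b θ₀ D s := sum_root_mul _ _ _
    _ = 0 := Finset.sum_eq_zero fun s _ => by
        rw [key_induction lf pm pp π b θ₀ hπpos hπdiff hπsum hpm0 hpm1 hpp0 hpp1 D s
          (hmass θ₀ s), mul_zero]
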